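/- Conversely, suppose X = Σ_l θ_l φ_l almost surely in H^p where {φ_l} is an orthonormal basis of H, θ_l are mean-zero random vectors in ℝ^p with covariance matrices Σ_l satisfying Σ_l tr(Σ_l) < ∞, and the θ_l are mutually uncorrelated. Then the covariance operator of X equals G = Σ_l Σ_l (φ_l ⊗ φ_l), and hence all eigenvectors of G are of the form e_{lj} φ_l where {e_{lj}}_{j=1}^p is an orthonormal eigenbasis of Σ_l. -/

import Mathlib

open MeasureTheory RealInnerProductSpace

/-- Conversely, if `X = ∑_l θ_l φ_l` almost surely with `{φ_l}` an orthonormal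
basis of `H`, the `θ_l` mean-zero random vectors with covariance matrices `Σ_l`,
`∑_l tr(Σ_l) < ∞`, and the `θ_l` mutually uncorrelated, then the covariance operator `G` of
`X` equals `∑_l Σ_l (φ_l ⊗ φ_l)`, and hence elements `e_{lj} φ_l` built from eigenvectors
of `Σ_l` are eigenvectors of `G`. -/
theorem stmt3 {H : Type*} [NormedAddCommGroup H] [InnerProductSpace ℝ H]
    [CompleteSpace H] (p : ℕ)
    {Ωs : Type*} [MeasurableSpace Ωs] (μ : Measure Ωs) [IsProbabilityMeasure μ]
    (X : Ωs → Fin p → H) (θ : ℕ → Ωs → Fin p → ℝ)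
    (φ : ℕ → H) (hφ : Orthonormal ℝ φ)
    (hcomplete : (Submodule.span ℝ (Set.range φ)).topologicalClosure = ⊤)
    (M : ℕ → Matrix (Fin p) (Fin p) ℝ)
    (hmeanθ : ∀ l j, ∫ ω, θ l ω j ∂μ = 0)
    (hcovθ : ∀ l j k, ∫ ω, θ l ω j * θ l ω k ∂μ = M l j k)
    (htr : Summable fun l => (M l).trace)
    (huncorr : ∀ l l', l ≠ l' → ∀ j k, ∫ ω, θ l ω j * θ l' ω k ∂μ = 0)
    (hX : ∀ᵐ ω ∂μ, ∀ j, HasSum (fun l => θ l ω j • φ l) (X ω j))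
    (G : (Fin p → H) →ₗ[ℝ] (Fin p → H))
    (hG : ∀ f g : Fin p → H,
      ∑ j, ⟪G f j, g j⟫ = ∫ ω, (∑ j, ⟪X ω j, f j⟫) * (∑ j, ⟪X ω j, g j⟫) ∂μ) :
    (∀ f : Fin p → H,
      HasSum (fun l => fun j => ((M l).mulVec (fun k => ⟪φ l, f k⟫) j) • φ l) (G f)) ∧
    (∀ (l : ℕ) (e : Fin p → ℝ) (lam : ℝ), (M l).mulVec e = lam • e →
      G (fun j => e j • φ l) = fun j => lam • (e j • φ l)) := by
  have hφ' : ∀ l m : ℕ, ⟪φ l, φ m⟫ = if l = m then 1 else 0 := fun l m =>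
    orthonormal_iff_ite.mp hφ l m
  -- representation in the Hilbert basis
  have hrep : ∀ x : H, HasSum (fun l => ⟪φ l, x⟫ • φ l) x := by
    intro x
    set b : HilbertBasis ℕ ℝ H := HilbertBasis.mk hφ (le_of_eq hcomplete.symm) with hbdef
    have hc : ⇑b = φ := HilbertBasis.coe_mk hφ _
    have h2 : HasSum (fun l => ⟪b l, x⟫ • b l) x := by
      have := b.hasSum_repr x
      refine this.congr_fun fun l => ?_
      rw [b.repr_apply_apply]
    rw [hc] at h2
    exact h2
  -- totality: equal inner products against all φ l' implies equality
  have heq : ∀ a b : H, (∀ l' : ℕ, ⟪φ l', a⟫ = ⟪φ l', b⟫) → a = b := by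
    intro a b hab
    have h1 := hrep a
    have h2 : HasSum (fun l => ⟪φ l, a⟫ • φ l) b := by
      have := hrep b
      refine HasSum.congr_fun this fun l => by rw [hab l]
    exact h1.unique h2
  -- sum-picking lemma
  have hpick : ∀ (u : Fin p → H) (k : Fin p) (x : H),
      ∑ m, ⟪u m, (Pi.single k x : Fin p → H) m⟫ = ⟪u k, x⟫ := by
    intro u k x
    rw [Finset.sum_eq_single k]
    · simp
    · intro m _ hm
      simp [Pi.single_eq_of_ne hm]
    · simp
  -- a.e. identity for the single-functions
  have hZ : ∀ᵐ ω ∂μ, ∀ (l : ℕ) (j : Fin p),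
      (∑ m, ⟪X ω m, (Pi.single j (φ l) : Fin p → H) m⟫) = θ l ω j := by
    filter_upwards [hX] with ω hω
    intro l j
    have h1 : HasSum (fun m => ⟪φ l, θ m ω j • φ m⟫) ⟪φ l, X ω j⟫ :=
      (hω j).mapL (innerSL ℝ (φ l))
    have h2 : HasSum (fun m : ℕ => if m = l then θ l ω j else 0) ⟪φ l, X ω j⟫ := by
      refine h1.congr_fun fun m => ?_
      rw [real_inner_smul_right, hφ' l m]
      by_cases hm : m = l
      · subst hm; simp
      · rw [if_neg hm, if_neg (fun h => hm h.symm), mul_zero]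
    have h3 : ⟪φ l, X ω j⟫ = θ l ω j := (h2.unique (hasSum_ite_eq l _))
    rw [hpick, real_inner_comm, h3]
  -- value of G on single functions, inner against φ l'
  have hGs : ∀ (l l' : ℕ) (j k : Fin p),
      ⟪φ l', G (Pi.single j (φ l)) k⟫ = if l = l' then M l j k else 0 := by
    intro l l' j k
    have h1 : ⟪φ l', G (Pi.single j (φ l)) k⟫
        = ∑ m, ⟪G (Pi.single j (φ l)) m, (Pi.single k (φ l') : Fin p → H) m⟫ := by
      rw [hpick, real_inner_comm]
    rw [h1, hG]
    have h2 : ∫ ω, (∑ m, ⟪X ω m, (Pi.single j (φ l) : Fin p → H) m⟫)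
        * (∑ m, ⟪X ω m, (Pi.single k (φ l') : Fin p → H) m⟫) ∂μ
        = ∫ ω, θ l ω j * θ l' ω k ∂μ := by
      refine integral_congr_ae ?_
      filter_upwards [hZ] with ω hω
      rw [hω l j, hω l' k]
    rw [h2]
    by_cases hl : l = l'
    · subst hl; simp [hcovθ l j k]
    · simp [hl, huncorr l l' hl j k]
  -- exact formula for G on singles
  have hGs' : ∀ (l : ℕ) (j k : Fin p),
      G (Pi.single j (φ l)) k = M l j k • φ l := by
    intro l j k
    refine heq _ _ fun l' => ?_
    rw [hGs l l' j k, real_inner_smul_right, hφ' l' l]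
    by_cases hl : l = l'
    · subst hl; simp
    · rw [if_neg hl, if_neg (fun h => hl h.symm), mul_zero]
  -- symmetry of the bilinear form
  have hsymm : ∀ f g : Fin p → H, ∑ j, ⟪G f j, g j⟫ = ∑ j, ⟪G g j, f j⟫ := by
    intro f g
    rw [hG, hG]
    exact integral_congr_ae (Filter.Eventually.of_forall fun ω => mul_comm _ _)
  -- key coefficient identity
  have key : ∀ (f : Fin p → H) (l : ℕ) (j : Fin p),
      ⟪φ l, G f j⟫ = (M l).mulVec (fun k => ⟪φ l, f k⟫) j := by
    intro f l j
    have h1 : ⟪φ l, G f j⟫ = ∑ m, ⟪G f m, (Pi.single j (φ l) : Fin p → H) m⟫ := by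
      rw [hpick, real_inner_comm]
    rw [h1, hsymm]
    have h2 : ∀ m, ⟪G (Pi.single j (φ l)) m, f m⟫ = M l j m * ⟪φ l, f m⟫ := by
      intro m
      rw [hGs' l j m, real_inner_smul_left]
    simp only [h2]
    simp [Matrix.mulVec, dotProduct]
  constructor
  · intro f
    rw [Pi.hasSum]
    intro j
    have : (fun l => ((M l).mulVec (fun k => ⟪φ l, f k⟫) j) • φ l)
        = fun l => ⟪φ l, G f j⟫ • φ l := by
      funext l; rw [key]
    rw [this]
    exact hrep (G f j)
  · intro l e lam hev
    funext j
    refine heq _ _ fun l' => ?_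
    rw [key]
    by_cases hl : l' = l
    · subst hl
      have hv : (fun k => ⟪φ l', e k • φ l'⟫) = e := by
        funext k
        rw [real_inner_smul_right, hφ' l' l', if_pos rfl, mul_one]
      rw [hv, hev]
      simp [real_inner_smul_right, hφ' l' l', mul_comm, hφ.1 l']
    · have hv : (fun k => ⟪φ l', e k • φ l⟫) = (0 : Fin p → ℝ) := by
        funext k
        rw [real_inner_smul_right, hφ' l' l, if_neg hl, mul_zero, Pi.zero_apply]
      rw [hv, Matrix.mulVec_zero]
      simp [real_inner_smul_right, hφ' l' l, hl]
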